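/- arXiv:1607.03294 — 5 statements merged into one kernel-verified Lean document; each statement's English description precedes it below -/
import Mathlib

section
/- For every real μ ≠ 0 and all real numbers T, A with 0 < T ≤ A, one has 0 ≤ F(2/(μ²·A)) - F(2/(μ²·T)) ≤ A/T - 1. -/
open MeasureTheory Real

/-- The exponential integral `E1 x = ∫_x^∞ e^{-t}/t dt`. -/
noncomputable def E1 (x : ℝ) : ℝ := ∫ t in Set.Ioi x, Real.exp (-t) / t

/-- `F x = e^x * E1 x`. -/
noncomputable def F (x : ℝ) : ℝ := Real.exp x * E1 x

lemma integrableOn_aux {x : ℝ} (hx : 0 < x) :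
    IntegrableOn (fun s : ℝ => Real.exp (x * (1 - s)) / s) (Set.Ioi 1) := by
  have hmeas : AEStronglyMeasurable (fun s : ℝ => Real.exp (x * (1 - s)) / s)
      (volume.restrict (Set.Ioi 1)) := by
    apply ContinuousOn.aestronglyMeasurable _ measurableSet_Ioi
    apply ContinuousOn.div (by fun_prop) continuousOn_id
    intro s hs
    exact ne_of_gt (lt_trans one_pos hs)
  refine Integrable.mono' (((exp_neg_integrableOn_Ioi 1 hx).const_mul (Real.exp x))) hmeas ?_
  filter_upwards [ae_restrict_mem measurableSet_Ioi] with s hs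
  have hs1 : (1 : ℝ) < s := hs
  have hsp : (0 : ℝ) < s := lt_trans one_pos hs1
  rw [Real.norm_eq_abs, abs_of_nonneg (by positivity)]
  have h1 : Real.exp (x * (1 - s)) / s ≤ Real.exp (x * (1 - s)) := by
    apply div_le_self (le_of_lt (Real.exp_pos _)) hs1.le
  have h2 : Real.exp (x * (1 - s)) = Real.exp x * Real.exp (-x * s) := by
    rw [← Real.exp_add]; ring_nf
  linarith [h1, h2.le]

lemma F_repr {x : ℝ} (hx : 0 < x) :
    F x = ∫ s in Set.Ioi (1 : ℝ), Real.exp (x * (1 - s)) / s := by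
  have h := MeasureTheory.integral_comp_mul_left_Ioi
    (fun t : ℝ => Real.exp (-t) / t) 1 hx
  simp only [mul_one, smul_eq_mul] at h
  -- h : ∫ s in Ioi 1, exp (-(x*s)) / (x*s) = x⁻¹ * ∫ t in Ioi x, exp (-t) / t
  have hE : E1 x = x * ∫ s in Set.Ioi (1 : ℝ), Real.exp (-(x * s)) / (x * s) := by
    rw [h, E1]; field_simp
  rw [F, hE, ← mul_assoc, ← MeasureTheory.integral_const_mul]
  refine setIntegral_congr_fun measurableSet_Ioi fun s hs => ?_
  have hs1 : (1 : ℝ) < s := hs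
  have hsp : (0 : ℝ) < s := lt_trans one_pos hs1
  have hexp : Real.exp x * Real.exp (-(x * s)) = Real.exp (x * (1 - s)) := by
    rw [← Real.exp_add]; ring_nf
  rw [← hexp]
  field_simp

theorem F_diff_bound (μ T A : ℝ) (hμ : μ ≠ 0) (hT : 0 < T) (hTA : T ≤ A) :
    0 ≤ F (2 / (μ ^ 2 * A)) - F (2 / (μ ^ 2 * T)) ∧
      F (2 / (μ ^ 2 * A)) - F (2 / (μ ^ 2 * T)) ≤ A / T - 1 := by
  have hμ2 : 0 < μ ^ 2 := by positivity
  have hA : 0 < A := lt_of_lt_of_le hT hTA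
  set a := 2 / (μ ^ 2 * A) with ha_def
  set b := 2 / (μ ^ 2 * T) with hb_def
  have ha : 0 < a := by positivity
  have hb : 0 < b := by positivity
  have hab : a ≤ b := by
    apply div_le_div_of_nonneg_left (by norm_num) (by positivity)
    exact mul_le_mul_of_nonneg_left hTA hμ2.le
  have hkey : (b - a) / a = A / T - 1 := by
    rw [ha_def, hb_def]
    field_simp
  have hIa := integrableOn_aux ha
  have hIb := integrableOn_aux hb
  have hdiff : F a - F b = ∫ s in Set.Ioi (1 : ℝ),
      (Real.exp (a * (1 - s)) / s - Real.exp (b * (1 - s)) / s) := by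
    rw [F_repr ha, F_repr hb, MeasureTheory.integral_sub hIa hIb]
  have hpt_nonneg : ∀ s ∈ Set.Ioi (1 : ℝ),
      0 ≤ Real.exp (a * (1 - s)) / s - Real.exp (b * (1 - s)) / s := by
    intro s hs
    have hs1 : (1 : ℝ) < s := hs
    have hsp : (0 : ℝ) < s := lt_trans one_pos hs1
    have hle : b * (1 - s) ≤ a * (1 - s) :=
      mul_le_mul_of_nonpos_right hab (by linarith)
    rw [← sub_div]
    exact div_nonneg (by linarith [Real.exp_le_exp.mpr hle]) hsp.le
  constructor
  · rw [hdiff]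
    apply setIntegral_nonneg measurableSet_Ioi
    exact hpt_nonneg
  · rw [hdiff, ← hkey]
    have hInt2 : IntegrableOn
        (fun s : ℝ => (b - a) * Real.exp a * Real.exp (-a * s)) (Set.Ioi 1) :=
      (exp_neg_integrableOn_Ioi 1 ha).const_mul _
    have hmono : (∫ s in Set.Ioi (1 : ℝ),
        (Real.exp (a * (1 - s)) / s - Real.exp (b * (1 - s)) / s)) ≤
        ∫ s in Set.Ioi (1 : ℝ), (b - a) * Real.exp a * Real.exp (-a * s) := by
      apply setIntegral_mono_on (hIa.sub hIb) hInt2 measurableSet_Ioi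
      intro s hs
      have hs1 : (1 : ℝ) < s := hs
      have hsp : (0 : ℝ) < s := lt_trans one_pos hs1
      have hnum : Real.exp (a * (1 - s)) - Real.exp (b * (1 - s)) ≤
          (b - a) * (s - 1) * Real.exp (a * (1 - s)) := by
        have hsplit : Real.exp (b * (1 - s)) =
            Real.exp (a * (1 - s)) * Real.exp ((b - a) * (1 - s)) := by
          rw [← Real.exp_add]; ring_nf
        have h1t : 1 + (b - a) * (1 - s) ≤ Real.exp ((b - a) * (1 - s)) := by
          linarith [Real.add_one_le_exp ((b - a) * (1 - s))]
        have hep : 0 < Real.exp (a * (1 - s)) := Real.exp_pos _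
        nlinarith [hep]
      have hden : Real.exp (a * (1 - s)) = Real.exp a * Real.exp (-a * s) := by
        rw [← Real.exp_add]; ring_nf
      simp only [Pi.sub_apply]
      rw [← sub_div, div_le_iff₀ hsp]
      have hba : 0 ≤ b - a := sub_nonneg.mpr hab
      have hep : 0 < Real.exp (a * (1 - s)) := Real.exp_pos _
      have h2 : (b - a) * (s - 1) * Real.exp (a * (1 - s)) ≤
          (b - a) * Real.exp a * Real.exp (-a * s) * s := by
        have hre : (b - a) * Real.exp a * Real.exp (-a * s) * s =
            (b - a) * Real.exp (a * (1 - s)) * s := by rw [hden]; ring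
        rw [hre]
        nlinarith [mul_nonneg hba hep.le]
      linarith
    refine le_trans hmono ?_
    have hcomp := MeasureTheory.integral_comp_mul_left_Ioi
      (fun t : ℝ => Real.exp (-t)) 1 ha
    simp only [mul_one, smul_eq_mul] at hcomp
    rw [MeasureTheory.integral_const_mul]
    have hval : (∫ s in Set.Ioi (1 : ℝ), Real.exp (-a * s)) = a⁻¹ * Real.exp (-a) := by
      rw [← integral_exp_neg_Ioi a, ← hcomp]
      refine setIntegral_congr_fun measurableSet_Ioi fun s _ => ?_
      ring_nf
    rw [hval]
    have h0 : Real.exp a * Real.exp (-a) = 1 := by rw [← Real.exp_add]; simp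
    have : (b - a) * Real.exp a * (a⁻¹ * Real.exp (-a)) = (b - a) / a := by
      field_simp
      nlinarith [h0]
    linarith [this]
end

section
/- For every real μ ≠ 0 and all real numbers T, A with T > 0 and T ≤ A ≤ T + √T/|μ|, one has F(2/(μ²·A)) - F(2/(μ²·T)) ≤ 1/(|μ|·√T). -/
open MeasureTheory Real

lemma integrableOn_E1kernel {x : ℝ} (hx : 0 < x) :
    IntegrableOn (fun t => Real.exp (-t) / t) (Set.Ioi x) := by
  have hint : IntegrableOn (fun t : ℝ => (1 / x) * Real.exp (-1 * t)) (Set.Ioi x) :=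
    (exp_neg_integrableOn_Ioi x one_pos).const_mul _
  refine hint.mono' ?_ ?_
  · refine (ContinuousOn.aestronglyMeasurable ?_ measurableSet_Ioi)
    refine ContinuousOn.div (Continuous.continuousOn (by continuity)) continuousOn_id ?_
    intro t ht
    exact ne_of_gt (lt_trans hx ht)
  · filter_upwards [ae_restrict_mem measurableSet_Ioi] with t ht
    have htpos : 0 < t := lt_trans hx ht
    rw [Real.norm_eq_abs, abs_div, abs_of_pos (Real.exp_pos _), abs_of_pos htpos]
    rw [div_le_iff₀ htpos]
    have h1 : (1 / x) * Real.exp (-1 * t) * t = Real.exp (-t) * (t / x) := by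
      ring_nf
    rw [h1]
    nth_rewrite 1 [show Real.exp (-t) = Real.exp (-t) * 1 by ring]
    gcongr
    rw [le_div_iff₀ hx]
    nlinarith [le_of_lt (Set.mem_Ioi.1 ht)]

lemma E1_nonneg {x : ℝ} (hx : 0 < x) : 0 ≤ E1 x := by
  refine setIntegral_nonneg measurableSet_Ioi fun t ht => ?_
  have : 0 < t := lt_trans hx ht
  positivity

lemma E1_sub {a b : ℝ} (ha : 0 < a) (hab : a ≤ b) :
    E1 a - E1 b = ∫ t in Set.Ioc a b, Real.exp (-t) / t := by
  have hb : 0 < b := lt_of_lt_of_le ha hab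
  have hunion : Set.Ioc a b ∪ Set.Ioi b = Set.Ioi a := Set.Ioc_union_Ioi_eq_Ioi hab
  have hdisj : Disjoint (Set.Ioc a b) (Set.Ioi b) := by
    apply Set.disjoint_left.2
    intro t ht ht'
    exact absurd ht.2 (not_le.2 ht')
  have hia : IntegrableOn (fun t => Real.exp (-t) / t) (Set.Ioi a) := integrableOn_E1kernel ha
  have hioc : IntegrableOn (fun t => Real.exp (-t) / t) (Set.Ioc a b) :=
    hia.mono_set (by rw [← hunion]; exact Set.subset_union_left)
  have hib : IntegrableOn (fun t => Real.exp (-t) / t) (Set.Ioi b) := integrableOn_E1kernel hb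
  have h := MeasureTheory.setIntegral_union hdisj measurableSet_Ioi hioc hib
  rw [hunion] at h
  unfold E1
  rw [h]
  ring

theorem F_diff_bound_sqrt (μ T A : ℝ) (hμ : μ ≠ 0) (hT : 0 < T) (hTA : T ≤ A)
    (hA : A ≤ T + Real.sqrt T / |μ|) :
    F (2 / (μ ^ 2 * A)) - F (2 / (μ ^ 2 * T)) ≤ 1 / (|μ| * Real.sqrt T) := by
  have hμ2 : 0 < μ ^ 2 := by positivity
  have hμa : 0 < |μ| := abs_pos.2 hμ
  have hApos : 0 < A := lt_of_lt_of_le hT hTA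
  set xA := 2 / (μ ^ 2 * A) with hxA
  set xT := 2 / (μ ^ 2 * T) with hxT
  have hxApos : 0 < xA := by positivity
  have hxTpos : 0 < xT := by positivity
  have hle : xA ≤ xT := by
    apply div_le_div_of_nonneg_left (by norm_num) (by positivity)
    exact mul_le_mul_of_nonneg_left hTA (le_of_lt hμ2)
  have hsub := E1_sub hxApos hle
  -- bound the Ioc integral
  have hbound : ∫ t in Set.Ioc xA xT, Real.exp (-t) / t
      ≤ Real.exp (-xA) * (Real.log xT - Real.log xA) := by
    have h1 : ∫ t in Set.Ioc xA xT, Real.exp (-t) / t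
        ≤ ∫ t in Set.Ioc xA xT, Real.exp (-xA) / t := by
      apply setIntegral_mono_on
      · exact (integrableOn_E1kernel hxApos).mono_set Set.Ioc_subset_Ioi_self
      · refine (ContinuousOn.integrableOn_Icc ?_).mono_set Set.Ioc_subset_Icc_self
        refine ContinuousOn.div continuousOn_const continuousOn_id fun t ht => ?_
        exact ne_of_gt (lt_of_lt_of_le hxApos ht.1)
      · exact measurableSet_Ioc
      · intro t ht
        have htp : 0 < t := hxApos.trans ht.1
        have hexp : Real.exp (-t) ≤ Real.exp (-xA) := Real.exp_le_exp.2 (by linarith [ht.1])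
        gcongr
    have h2 : ∫ t in Set.Ioc xA xT, Real.exp (-xA) / t
        = Real.exp (-xA) * (Real.log xT - Real.log xA) := by
      rw [← intervalIntegral.integral_of_le hle]
      have : ∀ t : ℝ, Real.exp (-xA) / t = Real.exp (-xA) * (1 / t) := fun t => by ring
      simp_rw [this]
      rw [intervalIntegral.integral_const_mul, integral_one_div, Real.log_div
        (ne_of_gt hxTpos) (ne_of_gt hxApos)]
      intro h
      rcases Set.mem_uIcc.1 h with h | h
      · exact absurd h.1 (not_le.2 hxApos)
      · exact absurd h.1 (not_le.2 hxTpos)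
    linarith
  -- log bound
  have hlog : Real.log xT - Real.log xA ≤ 1 / (|μ| * Real.sqrt T) := by
    have hq : xT / xA = A / T := by
      rw [hxT, hxA, div_div_div_comm, div_self two_ne_zero, one_div, inv_div,
        mul_div_mul_left _ _ (ne_of_gt hμ2)]
    have : Real.log xT - Real.log xA = Real.log (A / T) := by
      rw [← Real.log_div (ne_of_gt hxTpos) (ne_of_gt hxApos), hq]
    rw [this]
    have hAT : 0 < A / T := by positivity
    refine (Real.log_le_sub_one_of_pos hAT).trans ?_
    have hsT : 0 < Real.sqrt T := Real.sqrt_pos.2 hT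
    have heq : A / T - 1 = (A - T) / T := by field_simp
    rw [heq, div_le_div_iff₀ hT (by positivity)]
    have key : (A - T) * |μ| ≤ Real.sqrt T := by
      have h0 : A - T ≤ Real.sqrt T / |μ| := by linarith
      calc (A - T) * |μ| ≤ (Real.sqrt T / |μ|) * |μ| := by gcongr
        _ = Real.sqrt T := by field_simp
    have hss : Real.sqrt T * Real.sqrt T = T := Real.mul_self_sqrt hT.le
    nlinarith [mul_le_mul_of_nonneg_right key hsT.le]
  -- assemble
  have hE1T : 0 ≤ E1 xT := E1_nonneg hxTpos
  have hexp : Real.exp xA ≤ Real.exp xT := Real.exp_le_exp.2 hle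
  have step1 : F xA - F xT ≤ Real.exp xA * (E1 xA - E1 xT) := by
    unfold F
    nlinarith [Real.exp_pos xA]
  calc F xA - F xT ≤ Real.exp xA * (E1 xA - E1 xT) := step1
    _ ≤ Real.exp xA * (Real.exp (-xA) * (Real.log xT - Real.log xA)) := by
        rw [hsub]
        gcongr
    _ = Real.log xT - Real.log xA := by
        rw [← mul_assoc, ← Real.exp_add]; simp
    _ ≤ 1 / (|μ| * Real.sqrt T) := hlog
end

section
/- For every real μ ≠ 0 and all real numbers T, A with 0 < T ≤ A, one has 0 ≤ (2/(μ²·T)) · ∫_T^A F(2/(μ²·x)) · (1/x) dx ≤ (A/T) · log(A/T). -/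
open MeasureTheory Real

lemma exp_neg_int (y : ℝ) : IntegrableOn (fun t : ℝ => Real.exp (-t)) (Set.Ioi y) := by
  simpa using exp_neg_integrableOn_Ioi y one_pos

lemma f_int {y : ℝ} (hy : 0 < y) :
    IntegrableOn (fun t => Real.exp (-t) / t) (Set.Ioi y) := by
  refine Integrable.mono' ((exp_neg_int y).div_const y) ?_ ?_
  · refine (ContinuousOn.aestronglyMeasurable ?_ measurableSet_Ioi)
    exact ContinuousOn.div (Real.continuous_exp.comp continuous_neg).continuousOn
      continuousOn_id (fun t ht => ne_of_gt (hy.trans ht))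
  · filter_upwards [ae_restrict_mem measurableSet_Ioi] with t ht
    have ht0 : 0 < t := hy.trans ht
    rw [Real.norm_eq_abs, abs_of_nonneg (by positivity)]
    exact div_le_div_of_nonneg_left (Real.exp_pos _).le hy ht.le

lemma E1_nonneg_s6 {y : ℝ} (hy : 0 < y) : 0 ≤ E1 y := by
  refine setIntegral_nonneg measurableSet_Ioi (fun t ht => ?_)
  have : 0 < t := hy.trans ht
  positivity

lemma E1_le {y : ℝ} (hy : 0 < y) : E1 y ≤ Real.exp (-y) / y := by
  have h1 : E1 y ≤ ∫ t in Set.Ioi y, Real.exp (-t) / y := by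
    refine setIntegral_mono_on (f_int hy) ((exp_neg_int y).div_const y)
      measurableSet_Ioi (fun t ht => ?_)
    exact div_le_div_of_nonneg_left (Real.exp_pos _).le hy ht.le
  calc E1 y ≤ ∫ t in Set.Ioi y, Real.exp (-t) / y := h1
    _ = (∫ t in Set.Ioi y, Real.exp (-t)) / y := by rw [integral_div]
    _ = Real.exp (-y) / y := by rw [integral_exp_neg_Ioi]

lemma F_nonneg {y : ℝ} (hy : 0 < y) : 0 ≤ F y :=
  mul_nonneg (Real.exp_pos _).le (E1_nonneg_s6 hy)

lemma F_le {y : ℝ} (hy : 0 < y) : F y ≤ 1 / y := by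
  have h := E1_le hy
  calc F y = Real.exp y * E1 y := rfl
    _ ≤ Real.exp y * (Real.exp (-y) / y) :=
        mul_le_mul_of_nonneg_left h (Real.exp_pos _).le
    _ = 1 / y := by rw [← mul_div_assoc, ← Real.exp_add]; simp

lemma E1_eq_sub {a x : ℝ} (ha : 0 < a) (hax : a ≤ x) :
    E1 x = E1 a - ∫ t in a..x, Real.exp (-t) / t := by
  have hx : 0 < x := lt_of_lt_of_le ha hax
  have hsplit : E1 a = (∫ t in Set.Ioc a x, Real.exp (-t) / t) + E1 x := by
    unfold E1
    rw [← setIntegral_union (Set.Ioc_disjoint_Ioi le_rfl) measurableSet_Ioi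
      ((f_int ha).mono_set Set.Ioc_subset_Ioi_self) (f_int hx),
      Set.Ioc_union_Ioi_eq_Ioi hax]
  rw [intervalIntegral.integral_of_le hax]
  linarith [hsplit]

lemma E1_continuousOn {a b : ℝ} (ha : 0 < a) :
    ContinuousOn E1 (Set.Icc a b) := by
  rcases le_or_gt a b with hab | hab
  · have hsub : Set.Icc a b ⊆ Set.Ioi (a / 2) := fun t ht =>
      Set.mem_Ioi.mpr (lt_of_lt_of_le (half_lt_self ha) ht.1)
    have hint : IntegrableOn (fun t => Real.exp (-t) / t) (Set.uIcc a b) := by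
      rw [Set.uIcc_of_le hab]
      exact (f_int (half_pos ha)).mono_set hsub
    have hcont := intervalIntegral.continuousOn_primitive_interval hint
    rw [Set.uIcc_of_le hab] at hcont
    exact ((continuousOn_const (c := E1 a)).sub hcont).congr
      (fun x hx => E1_eq_sub ha hx.1)
  · simp [Set.Icc_eq_empty_of_lt hab]

theorem J2_bound (μ T A : ℝ) (hμ : μ ≠ 0) (hT : 0 < T) (hTA : T ≤ A) :
    0 ≤ (2 / (μ ^ 2 * T)) * (∫ x in T..A, F (2 / (μ ^ 2 * x)) * (1 / x)) ∧
      (2 / (μ ^ 2 * T)) * (∫ x in T..A, F (2 / (μ ^ 2 * x)) * (1 / x)) ≤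
        (A / T) * Real.log (A / T) := by
  have hc : (0:ℝ) < μ ^ 2 := by positivity
  have hA : 0 < A := lt_of_lt_of_le hT hTA
  set a : ℝ := 2 / (μ ^ 2 * A) with ha_def
  set b : ℝ := 2 / (μ ^ 2 * T) with hb_def
  have ha : 0 < a := by positivity
  have hy_mem : ∀ x ∈ Set.Icc T A, 2 / (μ ^ 2 * x) ∈ Set.Icc a b := by
    intro x hx
    have hx0 : 0 < x := lt_of_lt_of_le hT hx.1
    constructor
    · exact div_le_div_of_nonneg_left (by norm_num) (by positivity)
        (by nlinarith [hx.2])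
    · exact div_le_div_of_nonneg_left (by norm_num) (by positivity)
        (by nlinarith [hx.1])
  have hy_pos : ∀ x ∈ Set.Icc T A, 0 < 2 / (μ ^ 2 * x) := by
    intro x hx
    have hx0 : 0 < x := lt_of_lt_of_le hT hx.1
    positivity
  -- continuity of the integrand
  have hcont : ContinuousOn (fun x => F (2 / (μ ^ 2 * x)) * (1 / x)) (Set.Icc T A) := by
    have hy_cont : ContinuousOn (fun x : ℝ => 2 / (μ ^ 2 * x)) (Set.Icc T A) :=
      ContinuousOn.div continuousOn_const (continuousOn_const.mul continuousOn_id)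
        (fun x hx => by have := lt_of_lt_of_le hT hx.1; positivity)
    have hE1 : ContinuousOn (fun x => E1 (2 / (μ ^ 2 * x))) (Set.Icc T A) :=
      (E1_continuousOn ha).comp hy_cont hy_mem
    have hF : ContinuousOn (fun x => F (2 / (μ ^ 2 * x))) (Set.Icc T A) :=
      (Real.continuous_exp.comp_continuousOn hy_cont).mul hE1
    exact hF.mul (ContinuousOn.div continuousOn_const continuousOn_id
      (fun x hx => ne_of_gt (lt_of_lt_of_le hT hx.1)))
  have hII : IntervalIntegrable (fun x => F (2 / (μ ^ 2 * x)) * (1 / x)) volume T A := by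
    rw [← Set.uIcc_of_le hTA] at hcont
    exact hcont.intervalIntegrable
  have hnn : ∀ x ∈ Set.Icc T A, 0 ≤ F (2 / (μ ^ 2 * x)) * (1 / x) := by
    intro x hx
    have hx0 : 0 < x := lt_of_lt_of_le hT hx.1
    exact mul_nonneg (F_nonneg (hy_pos x hx)) (by positivity)
  have hIntNonneg : 0 ≤ ∫ x in T..A, F (2 / (μ ^ 2 * x)) * (1 / x) :=
    intervalIntegral.integral_nonneg hTA (fun x hx => hnn x hx)
  constructor
  · exact mul_nonneg (by positivity) hIntNonneg
  · -- pointwise bound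
    have hle : ∀ x ∈ Set.Icc T A, F (2 / (μ ^ 2 * x)) * (1 / x) ≤ μ ^ 2 / 2 := by
      intro x hx
      have hx0 : 0 < x := lt_of_lt_of_le hT hx.1
      have h1 : F (2 / (μ ^ 2 * x)) ≤ 1 / (2 / (μ ^ 2 * x)) := F_le (hy_pos x hx)
      have h2 : (1 : ℝ) / (2 / (μ ^ 2 * x)) = μ ^ 2 * x / 2 := by
        field_simp
      rw [h2] at h1
      calc F (2 / (μ ^ 2 * x)) * (1 / x) ≤ (μ ^ 2 * x / 2) * (1 / x) := by
            apply mul_le_mul_of_nonneg_right h1 (by positivity)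
        _ = μ ^ 2 / 2 := by field_simp
    have hIle : (∫ x in T..A, F (2 / (μ ^ 2 * x)) * (1 / x)) ≤ (A - T) * μ ^ 2 / 2 := by
      have := intervalIntegral.integral_mono_on hTA hII
        (intervalIntegrable_const (c := μ ^ 2 / 2)) hle
      simpa [one_div] using this
    have hmain : (2 / (μ ^ 2 * T)) * (∫ x in T..A, F (2 / (μ ^ 2 * x)) * (1 / x)) ≤
        A / T - 1 := by
      have h3 : (2 / (μ ^ 2 * T)) * ((A - T) * μ ^ 2 / 2) = A / T - 1 := by
        field_simp
      calc (2 / (μ ^ 2 * T)) * (∫ x in T..A, F (2 / (μ ^ 2 * x)) * (1 / x))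
          ≤ (2 / (μ ^ 2 * T)) * ((A - T) * μ ^ 2 / 2) := by
            apply mul_le_mul_of_nonneg_left hIle (by positivity)
        _ = A / T - 1 := h3
    refine le_trans hmain ?_
    set r : ℝ := A / T with hr_def
    have hr1 : 1 ≤ r := (one_le_div hT).mpr hTA
    have hr0 : 0 < r := lt_of_lt_of_le one_pos hr1
    have hlog : Real.log (1 / r) ≤ 1 / r - 1 :=
      Real.log_le_sub_one_of_pos (by positivity)
    rw [Real.log_div one_ne_zero (ne_of_gt hr0), Real.log_one] at hlog
    have : 1 - 1 / r ≤ Real.log r := by linarith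
    nlinarith [mul_le_mul_of_nonneg_left this hr0.le, mul_one_div_cancel (ne_of_gt hr0)]
end

section
/- Let (Ω, 𝔽, P) be a probability space, let A > 0 and λ > 0 and μ ≠ 0 be real numbers, and let Z : Ω → ℝ be a random variable with 0 ≤ Z ≤ A almost surely. If E[Z] = A - 1/λ and Var[Z] = (λ - μ²·(A·λ - 1)²)/(λ²·(μ² + λ)), then 1/A ≤ λ ≤ 1/A + (1 + √(4μ²A + 1))/(2μ²A²). -/
open MeasureTheory ProbabilityTheory Real

theorem lambda_double_inequality
    {Ω : Type*} [MeasurableSpace Ω] (P : Measure Ω) [IsProbabilityMeasure P]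
    (A lam μ : ℝ) (hA : 0 < A) (hlam : 0 < lam) (hμ : μ ≠ 0)
    (Z : Ω → ℝ) (hZmeas : Measurable Z)
    (hZae : ∀ᵐ ω ∂P, 0 ≤ Z ω ∧ Z ω ≤ A)
    (hmean : ∫ ω, Z ω ∂P = A - 1 / lam)
    (hvar : variance Z P = (lam - μ ^ 2 * (A * lam - 1) ^ 2) / (lam ^ 2 * (μ ^ 2 + lam))) :
    1 / A ≤ lam ∧ lam ≤ 1 / A + (1 + Real.sqrt (4 * μ ^ 2 * A + 1)) / (2 * μ ^ 2 * A ^ 2) := by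
  have hμ2 : (0:ℝ) < μ ^ 2 := by positivity
  -- mean nonneg
  have hmean0 : 0 ≤ ∫ ω, Z ω ∂P :=
    integral_nonneg_of_ae (hZae.mono fun ω h => h.1)
  rw [hmean] at hmean0
  have h1 : 1 ≤ A * lam := by
    have hl : 1 / lam ≤ A := by linarith
    calc (1:ℝ) = (1 / lam) * lam := by field_simp
    _ ≤ A * lam := by
        exact mul_le_mul_of_nonneg_right hl hlam.le
  have hleft : 1 / A ≤ lam := by
    rw [div_le_iff₀ hA]; nlinarith
  refine ⟨hleft, ?_⟩
  -- variance nonneg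
  have hvnn : 0 ≤ (lam - μ ^ 2 * (A * lam - 1) ^ 2) / (lam ^ 2 * (μ ^ 2 + lam)) := by
    rw [← hvar]; exact variance_nonneg Z P
  have hden : (0:ℝ) < lam ^ 2 * (μ ^ 2 + lam) := by positivity
  have hnum : 0 ≤ lam - μ ^ 2 * (A * lam - 1) ^ 2 := by
    rcases div_nonneg_iff.mp hvnn with ⟨h, _⟩ | ⟨_, h⟩
    · exact h
    · nlinarith
  set s := Real.sqrt (4 * μ ^ 2 * A + 1) with hs
  have hs0 : 0 ≤ s := Real.sqrt_nonneg _
  have hs2 : s ^ 2 = 4 * μ ^ 2 * A + 1 := Real.sq_sqrt (by positivity)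
  have hx : 0 ≤ A * lam - 1 := by linarith
  -- key: 2 μ² A (Aλ - 1) ≤ 1 + s
  have hqa : μ ^ 2 * A * (A * lam - 1) ^ 2 ≤ A * lam := by
    nlinarith [mul_le_mul_of_nonneg_left hnum hA.le]
  have hq : (2 * μ ^ 2 * A * (A * lam - 1) - 1) ^ 2 ≤ s ^ 2 := by
    nlinarith [mul_le_mul_of_nonneg_left hqa (by positivity : (0:ℝ) ≤ 4 * μ ^ 2)]
  have key : 2 * μ ^ 2 * A * (A * lam - 1) ≤ 1 + s := by
    nlinarith [hq, hs0, sq_nonneg (2 * μ ^ 2 * A * (A * lam - 1) - 1 + s), sq_nonneg (2 * μ ^ 2 * A * (A * lam - 1) - 1 - s)]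
  have h2 : (A * lam - 1) / A ≤ (1 + s) / (2 * μ ^ 2 * A ^ 2) := by
    rw [div_le_div_iff₀ hA (by positivity)]
    nlinarith [mul_le_mul_of_nonneg_right key hA.le]
  have h3 : lam - 1 / A = (A * lam - 1) / A := by field_simp
  linarith
end

section
/- Let μ ≠ 0 and A, T > 0 be real numbers. If 1/A ≤ 1/T ≤ 1/A + (1 + √(4μ²A + 1))/(2μ²A²), then T ≤ A ≤ T + √T/|μ|. -/
open Real

theorem threshold_double_inequality (μ A T : ℝ) (hμ : μ ≠ 0) (hA : 0 < A) (hT : 0 < T)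
    (h1 : 1 / A ≤ 1 / T)
    (h2 : 1 / T ≤ 1 / A + (1 + Real.sqrt (4 * μ ^ 2 * A + 1)) / (2 * μ ^ 2 * A ^ 2)) :
    T ≤ A ∧ A ≤ T + Real.sqrt T / |μ| := by
  have hm : 0 < μ ^ 2 := by positivity
  have hs0 : (0:ℝ) ≤ 4 * μ ^ 2 * A + 1 := by positivity
  set s := Real.sqrt (4 * μ ^ 2 * A + 1) with hsdef
  have hs2 : s ^ 2 = 4 * μ ^ 2 * A + 1 := Real.sq_sqrt hs0
  have hsnn : 0 ≤ s := Real.sqrt_nonneg _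
  have hs1 : 1 < s := by nlinarith
  have hTA : T ≤ A := by
    have := (div_le_div_iff₀ hA hT).mp h1; linarith
  refine ⟨hTA, ?_⟩
  have hμa : 0 < |μ| := abs_pos.mpr hμ
  have hμ2 : |μ| ^ 2 = μ ^ 2 := sq_abs μ
  set x := (s - 1) / (2 * |μ|) with hxdef
  have hx : 0 < x := by
    apply div_pos (by linarith) (by positivity)
  set T' := A + (1 - s) / (2 * μ ^ 2) with hTdef
  have hTx : T' = x ^ 2 := by
    rw [hTdef, hxdef]
    field_simp
    nlinarith [hs2, hμ2]
  have hT'pos : 0 < T' := by rw [hTx]; positivity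
  have hkey : 1 / A + (1 + s) / (2 * μ ^ 2 * A ^ 2) = 1 / T' := by
    rw [eq_div_iff (ne_of_gt hT'pos), hTdef]
    field_simp
    nlinarith [hs2]
  rw [hkey] at h2
  have hT'T : T' ≤ T := by
    have := (div_le_div_iff₀ hT hT'pos).mp h2; linarith
  have hsqrt : Real.sqrt T' = x := by
    rw [hTx, Real.sqrt_sq hx.le]
  have hAeq : A = T' + Real.sqrt T' / |μ| := by
    rw [hsqrt, hTdef, hxdef]
    field_simp
    nlinarith [hμ2]
  have hmono : Real.sqrt T' ≤ Real.sqrt T := Real.sqrt_le_sqrt hT'T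
  rw [hAeq]
  gcongr
end
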